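/- Let φ be L-smooth with empirical minimizer ê of ξ ↦ ξ + (1/n)Σᵢφ(xᵢ - ξ), and let e* be any real number. Define ocê = ê + (1/n)Σᵢφ(xᵢ - ê). Then |ocê - (e* + (1/n)Σᵢφ(xᵢ - e*))| ≤ (3L/2)(e* - ê)². -/

import Mathlib

/-- The empirical OCE value evaluated at the empirical minimizer `ê` is within
`(3L/2)(e* - ê)²` of the value evaluated at any point `e*`. -/
theorem stmt_14 (φ φ' : ℝ → ℝ) (hφ : ∀ x, HasDerivAt φ (φ' x) x)
    (L : ℝ) (hL : 0 < L) (hlip : ∀ a b : ℝ, |φ' a - φ' b| ≤ L * |a - b|)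
    (n : ℕ) (x : Fin n → ℝ) (estar ehat : ℝ)
    (hemp : (1 / (n : ℝ)) * ∑ i, φ' (x i - ehat) = 1) :
    |(ehat + (1 / (n : ℝ)) * ∑ i, φ (x i - ehat)) -
        (estar + (1 / (n : ℝ)) * ∑ i, φ (x i - estar))| ≤
      (3 * L / 2) * (estar - ehat) ^ 2 := by
  rcases Nat.eq_zero_or_pos n with hn | hn
  · subst hn; simp at hemp
  have hn' : (0 : ℝ) < n := by exact_mod_cast hn
  set F : ℝ → ℝ := fun ξ => ξ + (1 / (n : ℝ)) * ∑ i, φ (x i - ξ) with hF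
  set F' : ℝ → ℝ := fun ξ => 1 - (1 / (n : ℝ)) * ∑ i, φ' (x i - ξ) with hF'
  have hder : ∀ ξ : ℝ, HasDerivAt F (F' ξ) ξ := by
    intro ξ
    have h1 : HasDerivAt (fun ξ : ℝ => ∑ i, φ (x i - ξ))
        (∑ i : Fin n, -φ' (x i - ξ)) ξ := by
      apply HasDerivAt.fun_sum
      intro i _
      have := (hφ (x i - ξ)).comp ξ ((hasDerivAt_id ξ).const_sub (x i))
      simpa [Function.comp_def] using this
    have := (hasDerivAt_id ξ).add (h1.const_mul (1 / (n : ℝ)))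
    refine this.congr_deriv ?_
    simp [hF', Finset.sum_neg_distrib]
    ring
  have hF'ehat : F' ehat = 0 := by
    show 1 - (1 / (n : ℝ)) * ∑ i, φ' (x i - ehat) = 0
    rw [hemp]; ring
  have hbound : ∀ ξ ∈ segment ℝ ehat estar, ‖F' ξ‖ ≤ L * |estar - ehat| := by
    intro ξ hξ
    rw [segment_eq_uIcc] at hξ
    have hd : |ξ - ehat| ≤ |estar - ehat| := by
      rw [Set.mem_uIcc] at hξ
      rcases hξ with ⟨h1, h2⟩ | ⟨h1, h2⟩ <;> rw [abs_le] <;>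
        constructor <;> cases' abs_cases (estar - ehat) with h h <;> linarith [h.1]
    have : ‖F' ξ‖ = |(1 / (n : ℝ)) * ∑ i, (φ' (x i - ehat) - φ' (x i - ξ))| := by
      rw [Real.norm_eq_abs]
      congr 1
      show 1 - (1 / (n : ℝ)) * ∑ i, φ' (x i - ξ) = _
      rw [Finset.sum_sub_distrib, mul_sub, hemp]
    rw [this, abs_mul]
    have habs : |∑ i, (φ' (x i - ehat) - φ' (x i - ξ))| ≤ (n : ℝ) * (L * |estar - ehat|) := by
      calc |∑ i, (φ' (x i - ehat) - φ' (x i - ξ))| ≤ ∑ i : Fin n, |φ' (x i - ehat) - φ' (x i - ξ)| :=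
            Finset.abs_sum_le_sum_abs _ _
        _ ≤ ∑ _i : Fin n, L * |estar - ehat| := by
            apply Finset.sum_le_sum
            intro i _
            calc |φ' (x i - ehat) - φ' (x i - ξ)| ≤ L * |(x i - ehat) - (x i - ξ)| := hlip _ _
              _ ≤ L * |estar - ehat| := by
                  rw [show (x i - ehat) - (x i - ξ) = ξ - ehat by ring]
                  exact mul_le_mul_of_nonneg_left hd hL.le
        _ = (n : ℝ) * (L * |estar - ehat|) := by simp [Finset.sum_const]
    have h1n : |(1 / (n : ℝ))| = 1 / (n : ℝ) := abs_of_pos (by positivity)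
    rw [h1n]
    calc (1 / (n : ℝ)) * |∑ i, (φ' (x i - ehat) - φ' (x i - ξ))|
        ≤ (1 / (n : ℝ)) * ((n : ℝ) * (L * |estar - ehat|)) := by
          apply mul_le_mul_of_nonneg_left habs (by positivity)
      _ = L * |estar - ehat| := by field_simp
  have hseg : Convex ℝ (segment ℝ ehat estar) := convex_segment _ _
  have key := hseg.norm_image_sub_le_of_norm_hasDerivWithin_le
    (fun ξ hξ => (hder ξ).hasDerivWithinAt) hbound
    (left_mem_segment ℝ ehat estar) (right_mem_segment ℝ ehat estar)
  have : ‖F estar - F ehat‖ ≤ L * |estar - ehat| * ‖estar - ehat‖ := key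
  rw [Real.norm_eq_abs, Real.norm_eq_abs] at this
  have h2 : |F ehat - F estar| ≤ L * (estar - ehat) ^ 2 := by
    rw [abs_sub_comm]
    calc |F estar - F ehat| ≤ L * |estar - ehat| * |estar - ehat| := this
      _ = L * (estar - ehat) ^ 2 := by
          have := sq_abs (estar - ehat); nlinarith
  calc |F ehat - F estar| ≤ L * (estar - ehat) ^ 2 := h2
    _ ≤ (3 * L / 2) * (estar - ehat) ^ 2 := by nlinarith [sq_nonneg (estar - ehat)]
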